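/- Let m, k, n be positive integers (with n a real bound on costs), let D be a nonempty set, and for each interval t ∈ {1,…,m} and each index i ∈ {1,…,k} let f_{t,i} : D → [0, n] be a cost function; write f̄_t = (1/k) Σ_{i=1}^k f_{t,i} for the average cost of interval t. Let Ω = {1,…,k}^m with the uniform probability measure, write i_t(ω) = ω_t, and let the strategy at interval t be given by a map x_t : {1,…,k}^{t−1} → D, i.e., the point played at interval t depends only on the indices observed in previous intervals. Then E_ω [ Σ_{t=1}^m f̄_t(x_t(ω_1,…,ω_{t−1})) − inf_{x ∈ D} Σ_{t=1}^m f̄_t(x) ] ≤ E_ω [ Σ_{t=1}^m f_{t,i_t(ω)}(x_t(ω_1,…,ω_{t−1})) − inf_{x ∈ D} Σ_{t=1}^m f_{t,i_t(ω)}(x) ] + n·√m. In words: any online strategy for the random-costs setting (observing one uniformly random function per interval) with expected total regret R incurs expected total regret at most R + n√m in the average-costs setting. -/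

import Mathlib

/-- Averaging lemma: if `y ω` does not depend on `ω t`, then summing `g (ω t) (y ω)`
over all `ω` equals `k⁻¹` times summing over all indices `i`. -/
lemma avg_sum_aux {m k : ℕ} [NeZero k] {D : Type*} (t : Fin m)
    (g : Fin k → D → ℝ) (y : (Fin m → Fin k) → D)
    (hy : ∀ ω i, y (Function.update ω t i) = y ω) :
    ∑ ω : Fin m → Fin k, ∑ i, g i (y ω)
      = (k : ℝ) * ∑ ω : Fin m → Fin k, g (ω t) (y ω) := by
  calc ∑ ω : Fin m → Fin k, ∑ i, g i (y ω)
      = ∑ ω : Fin m → Fin k, ∑ j, g (ω t + j) (y ω) := by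
        refine Finset.sum_congr rfl fun ω _ => ?_
        exact (Fintype.sum_equiv (Equiv.addLeft (ω t))
          (fun j => g (ω t + j) (y ω)) (fun i => g i (y ω)) (fun j => rfl)).symm
    _ = ∑ j : Fin k, ∑ ω : Fin m → Fin k, g (ω t + j) (y ω) := Finset.sum_comm
    _ = ∑ j : Fin k, ∑ ω : Fin m → Fin k, g (ω t) (y ω) := by
        refine Finset.sum_congr rfl fun j _ => ?_
        refine Fintype.sum_equiv
          ⟨fun ω => Function.update ω t (ω t + j),
           fun ω => Function.update ω t (ω t - j), ?_, ?_⟩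
          (fun ω => g (ω t + j) (y ω)) (fun ω => g (ω t) (y ω)) ?_
        · intro ω; simp [Function.update_idem]
        · intro ω; simp [Function.update_idem]
        · intro ω; simp [Function.update_self, hy]
    _ = (k : ℝ) * ∑ ω : Fin m → Fin k, g (ω t) (y ω) := by
        simp [Finset.sum_const, nsmul_eq_mul]

/-- Lemma 4.2: any online strategy for the random-costs setting
(one uniformly random function among the `k` functions of each of the `m` intervals,
the point played at interval `t` depending only on the indices observed before `t`)
incurs, in the average-costs setting, expected total regret at most its expected
total regret in the random-costs setting plus `n √m`. -/
theorem random_costs_to_average_costs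
    (m k : ℕ) (hm : 0 < m) (hk : 0 < k) (n : ℝ) (hn : 0 < n)
    {D : Type*} [Nonempty D]
    (f : Fin m → Fin k → D → ℝ)
    (hf0 : ∀ t i d, 0 ≤ f t i d) (hfn : ∀ t i d, f t i d ≤ n)
    (x : Fin m → (Fin m → Fin k) → D)
    (hx : ∀ (t : Fin m) (ω ω' : Fin m → Fin k),
      (∀ s, s < t → ω s = ω' s) → x t ω = x t ω') :
    ((Fintype.card (Fin m → Fin k) : ℝ))⁻¹ *
        (∑ ω : Fin m → Fin k, ∑ t, (k : ℝ)⁻¹ * ∑ i, f t i (x t ω))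
      - (⨅ d : D, ∑ t, (k : ℝ)⁻¹ * ∑ i, f t i d)
    ≤ ((Fintype.card (Fin m → Fin k) : ℝ))⁻¹ *
        (∑ ω : Fin m → Fin k,
          ((∑ t, f t (ω t) (x t ω)) - ⨅ d : D, ∑ t, f t (ω t) d))
      + n * Real.sqrt m := by
  haveI : NeZero k := ⟨hk.ne'⟩
  set C : ℝ := (Fintype.card (Fin m → Fin k) : ℝ) with hCdef
  have hkR : (0:ℝ) < (k:ℝ) := by exact_mod_cast hk
  have hC : (0:ℝ) < C := by
    rw [hCdef]
    exact_mod_cast (Fintype.card_pos : 0 < Fintype.card (Fin m → Fin k))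
  -- Step A: the expected average cost equals the expected random cost.
  have stepA : ∑ ω : Fin m → Fin k, ∑ t, (k : ℝ)⁻¹ * ∑ i, f t i (x t ω)
      = ∑ ω : Fin m → Fin k, ∑ t, f t (ω t) (x t ω) := by
    rw [Finset.sum_comm, Finset.sum_comm (s := (Finset.univ : Finset (Fin m → Fin k)))]
    refine Finset.sum_congr rfl fun t _ => ?_
    have hy : ∀ ω i, x t (Function.update ω t i) = x t ω := by
      intro ω i
      exact hx t _ _ fun s hs => Function.update_of_ne hs.ne _ _
    have h := avg_sum_aux t (f t) (x t) hy
    rw [← Finset.mul_sum, h, inv_mul_cancel_left₀ hkR.ne']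
  -- Step B: the expectation of the inf is at most the inf of the expectation.
  have stepB : C⁻¹ * ∑ ω : Fin m → Fin k, (⨅ d : D, ∑ t, f t (ω t) d)
      ≤ ⨅ d : D, ∑ t, (k : ℝ)⁻¹ * ∑ i, f t i d := by
    refine le_ciInf fun d => ?_
    rw [inv_mul_le_iff₀ hC]
    have hbdd : ∀ ω : Fin m → Fin k,
        BddBelow (Set.range fun d : D => ∑ t, f t (ω t) d) := by
      intro ω
      refine ⟨0, ?_⟩
      rintro r ⟨d', rfl⟩
      exact Finset.sum_nonneg fun t _ => hf0 t (ω t) d' 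
    have h1 : ∑ ω : Fin m → Fin k, (⨅ d : D, ∑ t, f t (ω t) d)
        ≤ ∑ ω : Fin m → Fin k, ∑ t, f t (ω t) d :=
      Finset.sum_le_sum fun ω _ => ciInf_le (hbdd ω) d
    have h2 : ∑ ω : Fin m → Fin k, ∑ t, f t (ω t) d
        = C * ∑ t, (k : ℝ)⁻¹ * ∑ i, f t i d := by
      rw [Finset.sum_comm, Finset.mul_sum]
      refine Finset.sum_congr rfl fun t _ => ?_
      have h := avg_sum_aux t (f t) (fun _ => d) (fun ω i => rfl)
      have hconst : ∑ ω : Fin m → Fin k, ∑ i, f t i d = C * ∑ i, f t i d := by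
        simp [Finset.sum_const, nsmul_eq_mul, hCdef]
      have := h.symm.trans hconst
      -- this : (k:ℝ) * ∑ ω, f t (ω t) d = C * ∑ i, f t i d
      field_simp at this ⊢
      linarith [this]
    calc ∑ ω : Fin m → Fin k, (⨅ d : D, ∑ t, f t (ω t) d)
        ≤ ∑ ω : Fin m → Fin k, ∑ t, f t (ω t) d := h1
      _ = C * (∑ t, (k : ℝ)⁻¹ * ∑ i, f t i d) := h2
  -- Put things together.
  have hsplit : ∑ ω : Fin m → Fin k,
      ((∑ t, f t (ω t) (x t ω)) - ⨅ d : D, ∑ t, f t (ω t) d)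
      = (∑ ω : Fin m → Fin k, ∑ t, f t (ω t) (x t ω))
        - ∑ ω : Fin m → Fin k, (⨅ d : D, ∑ t, f t (ω t) d) :=
    Finset.sum_sub_distrib _ _
  have hsqrt : 0 ≤ n * Real.sqrt m := mul_nonneg hn.le (Real.sqrt_nonneg _)
  rw [stepA, hsplit, mul_sub]
  linarith [stepB]
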